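/- Let p>1, δ>0, a>0 and H>1, and set ε := (H/p)·((p−1)/(H−1))^{(p−1)/p}·δ. Consider the line L through the point (a, δ^p a^p) with slope δ^p a^{p−1} H, i.e. L = {(x,y): y = δ^p a^p + δ^p a^{p−1} H (x − a)}. Then for every (x,y) ∈ L with x>0 and y≥0 one has y^{1/p} ≤ ε·x; equivalently, the maximum of the function f(x,y) = y^{1/p} x^{-1} over such points equals ε, attained at x = a·p(H−1)/(H(p−1)). -/

import Mathlib

open Real

private lemma key_ineq (p H : ℝ) (hp : 1 < p) (hH : 1 < H) (t : ℝ) (ht : 0 < t) :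
    1 + H * (t - 1) ≤ (H / p) ^ p * ((p - 1) / (H - 1)) ^ (p - 1) * t ^ p := by
  have hp0 : (0:ℝ) < p := by linarith
  have hp1 : (0:ℝ) < p - 1 := by linarith
  have hH1 : (0:ℝ) < H - 1 := by linarith
  have hH0 : (0:ℝ) < H := by linarith
  set r : ℝ := (p - 1) / (H - 1) with hr
  have hr0 : 0 < r := by positivity
  set c : ℝ := H * (p - 1) / (p * (H - 1)) with hc
  have hc0 : 0 < c := by positivity
  set z : ℝ := c * t - 1 with hz
  have hz1 : -1 ≤ z := by nlinarith
  have hB : 1 + p * z ≤ (1 + z) ^ p :=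
    one_add_mul_self_le_rpow_one_add hz1 hp.le
  have h1z : 1 + z = c * t := by rw [hz]; ring
  have hlin : 1 + H * (t - 1) = (H - 1) / (p - 1) * (1 + p * z) := by
    rw [hz, hc]; field_simp; ring
  have hcp : c ^ p = (H / p) ^ p * r ^ p := by
    have h : c = H / p * r := by rw [hc, hr]; field_simp
    rw [h, mul_rpow (by positivity) hr0.le]
  have hrp : r ^ p = r ^ (p - 1) * r := by
    rw [← rpow_add_one hr0.ne']; ring_nf
  have hpow : (1 + z) ^ p = c ^ p * t ^ p := by
    rw [h1z, mul_rpow hc0.le ht.le]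
  have hinv : (H - 1) / (p - 1) * r = 1 := by rw [hr]; field_simp
  calc 1 + H * (t - 1) = (H - 1) / (p - 1) * (1 + p * z) := hlin
    _ ≤ (H - 1) / (p - 1) * ((1 + z) ^ p) :=
        mul_le_mul_of_nonneg_left hB (by positivity)
    _ = ((H - 1) / (p - 1) * r) * ((H / p) ^ p * r ^ (p - 1) * t ^ p) := by
        rw [hpow, hcp, hrp]; ring
    _ = (H / p) ^ p * ((p - 1) / (H - 1)) ^ (p - 1) * t ^ p := by
        rw [hinv, one_mul, ← hr]

theorem stmt12 (p δ a H ε : ℝ) (hp : 1 < p) (hδ : 0 < δ) (ha : 0 < a) (hH : 1 < H)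
    (hε : ε = H / p * ((p - 1) / (H - 1)) ^ ((p - 1) / p) * δ) :
    (∀ x y : ℝ, 0 < x → 0 ≤ y →
      y = δ ^ p * a ^ p + δ ^ p * a ^ (p - 1) * H * (x - a) → y ^ (1 / p) ≤ ε * x) ∧
    (δ ^ p * a ^ p + δ ^ p * a ^ (p - 1) * H * (a * p * (H - 1) / (H * (p - 1)) - a))
        ^ (1 / p)
      = ε * (a * p * (H - 1) / (H * (p - 1))) := by
  have hp0 : (0:ℝ) < p := by linarith
  have hp1 : (0:ℝ) < p - 1 := by linarith
  have hH1 : (0:ℝ) < H - 1 := by linarith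
  have hH0 : (0:ℝ) < H := by linarith
  have hr0 : (0:ℝ) < (p - 1) / (H - 1) := by positivity
  have hε0 : 0 < ε := by rw [hε]; positivity
  have haa : a ^ (p - 1) * a = a ^ p := by
    rw [← rpow_add_one ha.ne']; ring_nf
  have hεp : ε ^ p = (H / p) ^ p * ((p - 1) / (H - 1)) ^ (p - 1) * δ ^ p := by
    have hs : (((p - 1) / (H - 1)) ^ ((p - 1) / p)) ^ p
        = ((p - 1) / (H - 1)) ^ (p - 1) := by
      rw [← rpow_mul hr0.le, div_mul_cancel₀ _ hp0.ne']
    rw [hε, mul_rpow (by positivity) hδ.le, mul_rpow (by positivity) (by positivity), hs]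
  constructor
  · intro x y hx hy hline
    have ht : 0 < x / a := by positivity
    have hkey := key_ineq p H hp hH (x / a) ht
    have hyval : y = δ ^ p * a ^ p * (1 + H * (x / a - 1)) := by
      rw [hline, ← haa]; field_simp
    have hxa : a ^ p * (x / a) ^ p = x ^ p := by
      rw [← mul_rpow ha.le ht.le, mul_div_cancel₀ _ ha.ne']
    have hle : y ≤ (ε * x) ^ p := by
      rw [mul_rpow hε0.le hx.le, hεp, hyval]
      calc δ ^ p * a ^ p * (1 + H * (x / a - 1))
          ≤ δ ^ p * a ^ p * ((H / p) ^ p * ((p - 1) / (H - 1)) ^ (p - 1) * (x / a) ^ p) :=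
            mul_le_mul_of_nonneg_left hkey (by positivity)
        _ = (H / p) ^ p * ((p - 1) / (H - 1)) ^ (p - 1) * δ ^ p * (a ^ p * (x / a) ^ p) := by
            ring
        _ = (H / p) ^ p * ((p - 1) / (H - 1)) ^ (p - 1) * δ ^ p * x ^ p := by rw [hxa]
    have h2 : ((ε * x) ^ p) ^ (1 / p) = ε * x := by
      rw [← rpow_mul (by positivity), mul_one_div, div_self hp0.ne', rpow_one]
    calc y ^ (1 / p) ≤ ((ε * x) ^ p) ^ (1 / p) :=
          rpow_le_rpow hy hle (by positivity)
      _ = ε * x := h2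
  · set x₀ : ℝ := a * p * (H - 1) / (H * (p - 1)) with hx₀
    have hx₀pos : 0 < x₀ := by positivity
    have hyval : δ ^ p * a ^ p + δ ^ p * a ^ (p - 1) * H * (x₀ - a)
        = δ ^ p * a ^ p * ((H - 1) / (p - 1)) := by
      rw [← haa, hx₀]; field_simp; ring
    have hεx : ε * x₀ = δ * a * (((p - 1) / (H - 1)) ^ ((p - 1) / p)
        * ((H - 1) / (p - 1))) := by
      rw [hε, hx₀]; field_simp
    have hq0 : (0:ℝ) < (H - 1) / (p - 1) := by positivity
    have hrr : ((p - 1) / (H - 1)) ^ ((p - 1) / p) * ((H - 1) / (p - 1))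
        = ((H - 1) / (p - 1)) ^ ((1:ℝ) / p) := by
      have h1 : ((p - 1) / (H - 1)) = ((H - 1) / (p - 1))⁻¹ := by rw [inv_div]
      rw [h1, ← rpow_neg_one ((H - 1) / (p - 1)), ← rpow_mul hq0.le]
      nth_rewrite 2 [show (H - 1) / (p - 1) = ((H - 1) / (p - 1)) ^ (1:ℝ) by rw [rpow_one]]
      rw [← rpow_add hq0]
      congr 1
      field_simp
      ring
    have hδp : (δ ^ p) ^ (1 / p) = δ := by
      rw [← rpow_mul hδ.le, mul_one_div, div_self hp0.ne', rpow_one]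
    have hap : (a ^ p) ^ (1 / p) = a := by
      rw [← rpow_mul ha.le, mul_one_div, div_self hp0.ne', rpow_one]
    rw [hyval, mul_rpow (by positivity) hq0.le, mul_rpow (by positivity) (by positivity),
      hδp, hap, hεx, hrr]
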